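/- The metric spaces (M_f^∞, OT_∞) and (M^∞, OT_∞) are not separable. More precisely, for any fixed x ∈ W, the uncountable family S = { α·δ_x : α > 0 } satisfies OT_∞(μ, ν) = d(x, Δ) > 0 for all distinct μ, ν ∈ S, so neither space contains a countable dense subset. -/

import Mathlib

/-! Common setup: the birth-death plane, Radon measures, partial optimal transport. -/

noncomputable section

open MeasureTheory Topology Filter Set
open scoped ENNReal

/-- The ambient plane `ℝ²` (with the sup-norm, i.e. `q = ∞`). -/
abbrev P2 : Type := ℝ × ℝ

/-- The birth-death plane `W = {(b,d) : b < d}`. -/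
def Wbd : Set P2 := {p | p.1 < p.2}

/-- The closure `W̄` of the birth-death plane. -/
def Wcl : Set P2 := closure Wbd

/-- The diagonal `Δ`. -/
def Diag : Set P2 := {p | p.1 = p.2}

/-- Distance from a point to the diagonal, `‖x - Δ‖`. -/
def distDiag (x : P2) : ℝ := Metric.infDist x Diag

/-- The pseudometric `d(x,y) = min(‖x-y‖, ‖x-Δ‖ + ‖y-Δ‖)` on `W̄`. -/
def dW (x y : P2) : ℝ := min (dist x y) (distDiag x + distDiag y)

/-- The support of a Borel measure: points all of whose neighborhoods have
positive measure. -/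
def msupport {α : Type*} [TopologicalSpace α] [MeasurableSpace α] (μ : Measure α) : Set α :=
  {x | ∀ U ∈ 𝓝 x, 0 < μ U}

/-- `μ` is a Radon measure on the subspace `S`: it vanishes off `S`, is inner regular
(on relatively open sets) by compact sets, outer regular (by relatively open sets), and finite
on compact subsets of `S`. -/
def RadonOn {α : Type*} [TopologicalSpace α] [MeasurableSpace α] (S : Set α)
    (μ : Measure α) : Prop :=
  μ Sᶜ = 0 ∧
  (∀ U : Set α, IsOpen U → μ (U ∩ S) = ⨆ (K : Set α) (_ : K ⊆ U ∩ S) (_ : IsCompact K), μ K) ∧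
  (∀ E : Set α, E ⊆ S → MeasurableSet E →
    μ E = ⨅ (U : Set α) (_ : IsOpen U) (_ : E ⊆ U), μ (U ∩ S)) ∧
  (∀ K : Set α, K ⊆ S → IsCompact K → μ K < ⊤)

/-- The set `M` of Radon measures on `W`. -/
def MRadon : Set (Measure P2) := {μ | RadonOn Wbd μ}

/-- `pers_∞(μ) = sup{‖x-Δ‖ : x ∈ spt μ}` (valued in `ℝ≥0∞`). -/
def persInf (μ : Measure P2) : ℝ≥0∞ := ⨆ x ∈ msupport μ, ENNReal.ofReal (distDiag x)

/-- The space `M^∞` of Radon measures on `W` with finite `∞`-persistence. -/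
def MInf : Set (Measure P2) := {μ | RadonOn Wbd μ ∧ persInf μ < ⊤}

/-- A coupling (admissible transport plan) between `μ` and `ν`: a Radon measure on
`W̄ × W̄` whose marginals restricted to Borel subsets of `W` are `μ` and `ν`. -/
def IsCoupling (π : Measure (P2 × P2)) (μ ν : Measure P2) : Prop :=
  RadonOn (Wcl ×ˢ Wcl) π ∧
  (∀ A : Set P2, A ⊆ Wbd → MeasurableSet A → π (A ×ˢ Wcl) = μ A) ∧
  (∀ B : Set P2, B ⊆ Wbd → MeasurableSet B → π (Wcl ×ˢ B) = ν B)

/-- The `∞`-cost of a transport plan: `sup {d(x,y) : (x,y) ∈ spt π}`. -/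
def costInf (π : Measure (P2 × P2)) : ℝ≥0∞ :=
  ⨆ p ∈ msupport π, ENNReal.ofReal (dW p.1 p.2)

/-- The partial `∞`-optimal transport distance. -/
def OT (μ ν : Measure P2) : ℝ≥0∞ :=
  ⨅ (π : Measure (P2 × P2)) (_ : IsCoupling π μ ν), costInf π

/-- `W_ε = {(x,y) : y - x > ε}`. -/
def Weps (ε : ℝ) : Set P2 := {p | p.2 - p.1 > ε}

/-- The space `M_f^∞` of off-diagonally finite measures. -/
def Mf : Set (Measure P2) := {μ | μ ∈ MInf ∧ ∀ ε : ℝ, 0 < ε → μ (Weps ε) < ⊤}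

/-- The space `M_fin^∞` of finite measures in `M^∞`. -/
def Mfin : Set (Measure P2) := {μ | μ ∈ MInf ∧ μ Wbd < ⊤}

/-- `f ∈ C_c(W)`: a continuous function, compactly supported, with support contained
in the open set `W` (extended by zero to the plane). -/
def IsCcW (f : P2 → ℝ) : Prop :=
  Continuous f ∧ HasCompactSupport f ∧ tsupport f ⊆ Wbd

/-- Convergence of a sequence of measures to `μ` in the distance `OT_∞`. -/
def OTConv (u : ℕ → Measure P2) (μ : Measure P2) : Prop :=
  Tendsto (fun n => OT (u n) μ) atTop (𝓝 0)

-- auxiliary lemmas, to be inserted before the main theorem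

open scoped Classical

section Aux

lemma diag_closed : IsClosed Diag := isClosed_eq continuous_fst continuous_snd

lemma wbd_open : IsOpen Wbd := isOpen_lt continuous_fst continuous_snd

lemma diag_nonempty : Diag.Nonempty := ⟨(0, 0), rfl⟩

lemma diag_subset_wcl : Diag ⊆ Wcl := by
  rintro ⟨a, b⟩ (hab : a = b)
  subst hab
  have : Tendsto (fun n : ℕ => ((a - 1 / (n + 1) : ℝ), a)) atTop (𝓝 (a, a)) := by
    refine Tendsto.prodMk_nhds ?_ tendsto_const_nhds
    have h1 : Tendsto (fun n : ℕ => (1 : ℝ) / (n + 1)) atTop (𝓝 0) :=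
      tendsto_one_div_add_atTop_nhds_zero_nat
    have := tendsto_const_nhds (x := a) (f := atTop (α := ℕ)).sub h1
    simpa using this
  refine mem_closure_of_tendsto this ?_
  filter_upwards with n
  show a - 1 / (n + 1 : ℝ) < a
  have : (0 : ℝ) < 1 / (n + 1) := by positivity
  linarith

lemma wbd_subset_wcl : Wbd ⊆ Wcl := subset_closure

lemma wcl_subset : Wcl ⊆ {p : P2 | p.1 ≤ p.2} := by
  apply closure_minimal
  · exact fun p hp => show p.1 ≤ p.2 from le_of_lt hp
  · exact isClosed_le continuous_fst continuous_snd

lemma wcl_diff_wbd_subset_diag : Wcl \ Wbd ⊆ Diag := by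
  rintro p ⟨hp1, hp2⟩
  have h1 : p.1 ≤ p.2 := wcl_subset hp1
  have h2 : ¬ p.1 < p.2 := hp2
  exact le_antisymm h1 (not_lt.1 h2)

lemma distDiag_nonneg (y : P2) : 0 ≤ distDiag y := Metric.infDist_nonneg

lemma distDiag_pos {x : P2} (hx : x ∈ Wbd) : 0 < distDiag x := by
  rw [distDiag, ← diag_closed.notMem_iff_infDist_pos diag_nonempty]
  exact fun h => (ne_of_lt hx) h

lemma distDiag_eq_zero {p : P2} (hp : p ∈ Diag) : distDiag p = 0 :=
  Metric.infDist_zero_of_mem hp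

lemma distDiag_le_dist {y p : P2} (hp : p ∈ Diag) : distDiag y ≤ dist y p :=
  Metric.infDist_le_dist_of_mem hp

lemma continuous_distDiag : Continuous distDiag := Metric.continuous_infDist_pt _

lemma dW_nonneg (a b : P2) : 0 ≤ dW a b :=
  le_min dist_nonneg (add_nonneg (distDiag_nonneg a) (distDiag_nonneg b))

/-- In a second countable space the complement of the support is null. -/
lemma measure_msupport_compl {γ : Type*} [TopologicalSpace γ]
    [SecondCountableTopology γ] [MeasurableSpace γ] (μ : Measure γ) :
    μ (msupport μ)ᶜ = 0 := by
  obtain ⟨b, hbc, -, hb⟩ := TopologicalSpace.exists_countable_basis γ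
  set S : Set (Set γ) := {U ∈ b | μ U = 0} with hS
  have hsub : (msupport μ)ᶜ ⊆ ⋃₀ S := by
    intro y hy
    simp only [msupport, mem_compl_iff, mem_setOf_eq, not_forall] at hy
    obtain ⟨V, hV, hVpos⟩ := hy
    have hV0 : μ V = 0 := by simpa using hVpos
    obtain ⟨U, hUb, hyU, hUV⟩ := hb.mem_nhds_iff.1 hV
    exact ⟨U, ⟨hUb, le_antisymm (hV0 ▸ measure_mono hUV) zero_le⟩, hyU⟩
  have : μ (⋃₀ S) = 0 :=
    (measure_sUnion_null_iff (hbc.mono (sep_subset _ _))).2 fun U hU => hU.2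
  exact le_antisymm (this ▸ measure_mono hsub) zero_le

lemma null_of_disjoint_msupport {γ : Type*} [TopologicalSpace γ]
    [SecondCountableTopology γ] [MeasurableSpace γ] (μ : Measure γ)
    {K : Set γ} (h : K ∩ msupport μ = ∅) : μ K = 0 := by
  have hsub : K ⊆ (msupport μ)ᶜ := fun y hy hy' =>
    (eq_empty_iff_forall_notMem.1 h y) ⟨hy, hy'⟩
  exact le_antisymm ((measure_msupport_compl μ) ▸ measure_mono hsub) zero_le

lemma le_costInf {π : Measure (P2 × P2)} {p : P2 × P2} (hp : p ∈ msupport π) :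
    ENNReal.ofReal (dW p.1 p.2) ≤ costInf π := by
  rw [costInf]
  exact le_iSup₂ (f := fun q (_ : q ∈ msupport π) => ENNReal.ofReal (dW q.1 q.2)) p hp

/-- If the cost is `< t` then `π` gives no mass to sets where `dW ≥ t`. -/
lemma costInf_avoid {π : Measure (P2 × P2)} {t : ℝ} {K : Set (P2 × P2)}
    (hc : costInf π < ENNReal.ofReal t) (hK : ∀ p ∈ K, t ≤ dW p.1 p.2) : π K = 0 := by
  apply null_of_disjoint_msupport
  rw [eq_empty_iff_forall_notMem]
  rintro p ⟨hpK, hps⟩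
  have h1 : ENNReal.ofReal t ≤ ENNReal.ofReal (dW p.1 p.2) :=
    ENNReal.ofReal_le_ofReal (hK p hpK)
  exact absurd ((h1.trans (le_costInf hps)).trans_lt hc) (lt_irrefl _)

/-- A finite measure concentrated on a finite subset of `S` is Radon on `S`. -/
lemma radonOn_of_finite {γ : Type*} [TopologicalSpace γ] [T1Space γ] [MeasurableSpace γ]
    {S T : Set γ} (μ : Measure γ) (hT : T.Finite) (hTS : T ⊆ S)
    (hnull : μ Tᶜ = 0) (hfin : μ Set.univ < ⊤) : RadonOn S μ := by
  refine ⟨?_, ?_, ?_, ?_⟩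
  · exact le_antisymm (hnull ▸ measure_mono (compl_subset_compl.2 hTS)) zero_le
  · intro U hU
    apply le_antisymm
    · have hcover : U ∩ S ⊆ (T ∩ (U ∩ S)) ∪ Tᶜ := by
        intro y hy
        by_cases hyT : y ∈ T
        · exact Or.inl ⟨hyT, hy⟩
        · exact Or.inr hyT
      have h1 : μ (U ∩ S) ≤ μ (T ∩ (U ∩ S)) := by
        calc μ (U ∩ S) ≤ μ (T ∩ (U ∩ S)) + μ Tᶜ :=
              (measure_mono hcover).trans (measure_union_le _ _)
          _ = μ (T ∩ (U ∩ S)) := by rw [hnull, add_zero]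
      refine h1.trans ?_
      refine le_iSup_of_le (T ∩ (U ∩ S)) ?_
      refine le_iSup_of_le inter_subset_right ?_
      exact le_iSup_of_le ((hT.inter_of_left _).isCompact) le_rfl
    · exact iSup_le fun K => iSup_le fun hK => iSup_le fun _ => measure_mono hK
  · intro E hES hEm
    apply le_antisymm
    · refine le_iInf fun U => le_iInf fun hU => le_iInf fun hEU => ?_
      exact measure_mono (subset_inter hEU hES)
    · have hTE : (T \ E).Finite := hT.diff
      have hUopen : IsOpen (T \ E)ᶜ := hTE.isClosed.isOpen_compl
      have hEsub : E ⊆ (T \ E)ᶜ := fun y hy h => h.2 hy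
      have hbound : μ ((T \ E)ᶜ ∩ S) ≤ μ E := by
        have hcover : (T \ E)ᶜ ∩ S ⊆ E ∪ Tᶜ := by
          rintro y ⟨hy1, _⟩
          by_cases hyT : y ∈ T
          · by_cases hyE : y ∈ E
            · exact Or.inl hyE
            · exact absurd ⟨hyT, hyE⟩ hy1
          · exact Or.inr hyT
        calc μ ((T \ E)ᶜ ∩ S) ≤ μ E + μ Tᶜ :=
              (measure_mono hcover).trans (measure_union_le _ _)
          _ = μ E := by rw [hnull, add_zero]
      calc (⨅ (U : Set γ) (_ : IsOpen U) (_ : E ⊆ U), μ (U ∩ S))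
          ≤ μ ((T \ E)ᶜ ∩ S) := by
            refine iInf_le_of_le (T \ E)ᶜ ?_
            refine iInf_le_of_le hUopen ?_
            exact iInf_le_of_le hEsub le_rfl
        _ ≤ μ E := hbound
  · intro K _ _
    exact (measure_mono (subset_univ K)).trans_lt hfin

lemma msupport_subset_of_null {γ : Type*} [TopologicalSpace γ] [T1Space γ] [MeasurableSpace γ]
    {T : Set γ} (μ : Measure γ) (hT : T.Finite) (hnull : μ Tᶜ = 0) : msupport μ ⊆ T := by
  intro p hp
  by_contra hpT
  have : Tᶜ ∈ 𝓝 p := hT.isClosed.isOpen_compl.mem_nhds hpT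
  have := hp Tᶜ this
  rw [hnull] at this
  exact lt_irrefl _ this

end Aux

section Key

lemma smul_dirac_apply (α : ℝ) (x : P2) (A : Set P2) :
    (ENNReal.ofReal α • Measure.dirac x) A
      = if x ∈ A then ENNReal.ofReal α else 0 := by
  rw [Measure.smul_apply, Measure.dirac_apply, smul_eq_mul]
  by_cases h : x ∈ A <;> simp [h, indicator]

/-- The fixed "witness" set `B(x)` used for the separation argument. -/
def Bset (x : P2) : Set P2 := {y | y ∈ Wbd ∧ distDiag x / 2 < distDiag y}

lemma Bset_open (x : P2) : IsOpen (Bset x) := by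
  have : Bset x = Wbd ∩ distDiag ⁻¹' (Set.Ioi (distDiag x / 2)) := rfl
  rw [this]
  exact wbd_open.inter (isOpen_Ioi.preimage continuous_distDiag)

lemma Bset_subset (x : P2) : Bset x ⊆ Wbd := fun _ h => h.1

lemma x_mem_Bset {x : P2} (hx : x ∈ Wbd) : x ∈ Bset x :=
  ⟨hx, by have := distDiag_pos hx; linarith⟩

/-- Key marginal lemma: a cheap coupling with first marginal `α·δ_x` forces the
second marginal to give `Bset x` exactly mass `α`. -/
lemma key_marg {x : P2} (hx : x ∈ Wbd) {α : ℝ} (hα : 0 ≤ α) (ν : Measure P2)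
    (π : Measure (P2 × P2)) (hπ : IsCoupling π (ENNReal.ofReal α • Measure.dirac x) ν)
    (hc : costInf π < ENNReal.ofReal (distDiag x / 2)) :
    ν (Bset x) = ENNReal.ofReal α := by
  obtain ⟨hrad, hm1, hm2⟩ := hπ
  set r := distDiag x with hr_def
  have hr : 0 < r := distDiag_pos hx
  have hxcl : x ∈ Wcl := wbd_subset_wcl hx
  have hB_Wcl : Bset x ⊆ Wcl := (Bset_subset x).trans wbd_subset_wcl
  -- no mass from the diagonal part into B
  have hK1 : π ((Wcl \ Wbd) ×ˢ Bset x) = 0 := by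
    refine costInf_avoid hc ?_
    rintro ⟨p, y⟩ ⟨hp, hy⟩
    have hpD : p ∈ Diag := wcl_diff_wbd_subset_diag hp
    have h1 : distDiag y ≤ dist p y := by
      rw [dist_comm]; exact distDiag_le_dist hpD
    have h2 : r / 2 ≤ distDiag y := le_of_lt hy.2
    have h3 : distDiag p = 0 := distDiag_eq_zero hpD
    simp only [dW]
    refine le_min (h2.trans h1) ?_
    rw [h3, zero_add]; exact h2
  -- no mass from x outside B
  have hK2 : π ({x} ×ˢ (Wcl \ Bset x)) = 0 := by
    refine costInf_avoid hc ?_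
    rintro ⟨p, y⟩ ⟨hp, hy⟩
    have hp' : x = p := Eq.symm hp
    subst hp'
    have hy2 : distDiag y ≤ r / 2 := by
      by_cases hyW : y ∈ Wbd
      · have : ¬ (r / 2 < distDiag y) := fun h => hy.2 ⟨hyW, h⟩
        linarith [not_lt.1 this]
      · have : y ∈ Diag := wcl_diff_wbd_subset_diag ⟨hy.1, hyW⟩
        rw [distDiag_eq_zero this]; linarith
    have hdist : r / 2 ≤ dist x y := by
      have h' : distDiag x ≤ distDiag y + dist x y :=
        Metric.infDist_le_infDist_add_dist (x := x) (y := y) (s := Diag)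
      rw [← hr_def] at h'
      linarith
    simp only [dW]
    refine le_min hdist ?_
    have := distDiag_nonneg y
    rw [← hr_def]
    linarith
  -- mass from other points of W is zero
  have hW1 : π ((Wbd \ {x}) ×ˢ Wcl) = 0 := by
    rw [hm1 (Wbd \ {x}) diff_subset (wbd_open.measurableSet.diff (measurableSet_singleton x)),
      smul_dirac_apply]
    simp
  -- nothing outside Wcl × Wcl
  have hout : π ((Wcl ×ˢ Wcl)ᶜ) = 0 := hrad.1
  -- ν B = π ({x} × B)
  have hν : ν (Bset x) = π ({x} ×ˢ Bset x) := by
    rw [← hm2 (Bset x) (Bset_subset x) (Bset_open x).measurableSet]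
    apply le_antisymm
    · have hcover : Wcl ×ˢ Bset x ⊆
          ({x} ×ˢ Bset x) ∪ (((Wbd \ {x}) ×ˢ Wcl) ∪ ((Wcl \ Wbd) ×ˢ Bset x)) := by
        rintro ⟨p, y⟩ ⟨hp, hy⟩
        by_cases hpx : p = x
        · exact Or.inl ⟨hpx, hy⟩
        · by_cases hpW : p ∈ Wbd
          · exact Or.inr (Or.inl ⟨⟨hpW, hpx⟩, hB_Wcl hy⟩)
          · exact Or.inr (Or.inr ⟨⟨hp, hpW⟩, hy⟩)
      calc π (Wcl ×ˢ Bset x) ≤ π ({x} ×ˢ Bset x)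
            + (π ((Wbd \ {x}) ×ˢ Wcl) + π ((Wcl \ Wbd) ×ˢ Bset x)) :=
            (measure_mono hcover).trans ((measure_union_le _ _).trans
              (add_le_add le_rfl (measure_union_le _ _)))
        _ = π ({x} ×ˢ Bset x) := by rw [hW1, hK1, add_zero, add_zero]
    · exact measure_mono (Set.prod_mono (by simp [hxcl]) le_rfl)
  -- α = π ({x} × B)
  have hα' : ENNReal.ofReal α = π ({x} ×ˢ Bset x) := by
    have hx1 : π ({x} ×ˢ Wcl) = ENNReal.ofReal α := by
      rw [hm1 {x} (by simpa using hx) (measurableSet_singleton x), smul_dirac_apply]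
      simp
    rw [← hx1]
    apply le_antisymm
    · have hcover : {x} ×ˢ Wcl ⊆ ({x} ×ˢ Bset x) ∪ ({x} ×ˢ (Wcl \ Bset x)) := by
        rintro ⟨p, y⟩ ⟨hp, hy⟩
        by_cases hyB : y ∈ Bset x
        · exact Or.inl ⟨hp, hyB⟩
        · exact Or.inr ⟨hp, hy, hyB⟩
      calc π ({x} ×ˢ Wcl) ≤ π ({x} ×ˢ Bset x) + π ({x} ×ˢ (Wcl \ Bset x)) :=
            (measure_mono hcover).trans (measure_union_le _ _)
        _ = π ({x} ×ˢ Bset x) := by rw [hK2, add_zero]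
    · exact measure_mono (Set.prod_mono le_rfl hB_Wcl)
  rw [hν, ← hα']

/-- If a coupling between `α·δ_x` and `β·δ_x` is cheaper than `d(x,Δ)`, then `α = β`. -/
lemma eq_of_cheap_coupling {x : P2} (hx : x ∈ Wbd) {α β : ℝ} (hα : 0 ≤ α) (hβ : 0 ≤ β)
    (π : Measure (P2 × P2))
    (hπ : IsCoupling π (ENNReal.ofReal α • Measure.dirac x) (ENNReal.ofReal β • Measure.dirac x))
    (hc : costInf π < ENNReal.ofReal (distDiag x)) : α = β := by
  obtain ⟨hrad, hm1, hm2⟩ := hπ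
  set r := distDiag x with hr_def
  have hr : 0 < r := distDiag_pos hx
  have hxcl : x ∈ Wcl := wbd_subset_wcl hx
  have hxm : MeasurableSet ({x} : Set P2) := measurableSet_singleton x
  have hxW : ({x} : Set P2) ⊆ Wbd := by simpa using hx
  have hdiag : ∀ p ∈ Wcl \ Wbd, r ≤ dist x p := by
    intro p hp
    exact distDiag_le_dist (wcl_diff_wbd_subset_diag hp)
  have hK1 : π ({x} ×ˢ (Wcl \ Wbd)) = 0 := by
    refine costInf_avoid hc ?_
    rintro ⟨p, y⟩ ⟨hp, hy⟩
    have hp' : x = p := Eq.symm hp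
    subst hp'
    have h0 : distDiag y = 0 := distDiag_eq_zero (wcl_diff_wbd_subset_diag hy)
    simp only [dW]
    refine le_min (hdiag y hy) ?_
    rw [h0, add_zero, ← hr_def]
  have hK2 : π ((Wcl \ Wbd) ×ˢ {x}) = 0 := by
    refine costInf_avoid hc ?_
    rintro ⟨p, y⟩ ⟨hp, hy⟩
    have hy' : x = y := Eq.symm hy
    subst hy'
    have h0 : distDiag p = 0 := distDiag_eq_zero (wcl_diff_wbd_subset_diag hp)
    simp only [dW]
    refine le_min ?_ ?_
    · rw [dist_comm]; exact hdiag p hp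
    · rw [h0, zero_add, ← hr_def]
  have hW1 : π ((Wbd \ {x}) ×ˢ Wcl) = 0 := by
    rw [hm1 (Wbd \ {x}) diff_subset (wbd_open.measurableSet.diff hxm), smul_dirac_apply]
    simp
  have hW2 : π (Wcl ×ˢ (Wbd \ {x})) = 0 := by
    rw [hm2 (Wbd \ {x}) diff_subset (wbd_open.measurableSet.diff hxm), smul_dirac_apply]
    simp
  have hsplit : ∀ (c : ℝ), π ({x} ×ˢ Wcl) = ENNReal.ofReal c →
      π (({x} : Set P2) ×ˢ ({x} : Set P2)) = ENNReal.ofReal c := by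
    intro c hc'
    rw [← hc']
    apply le_antisymm
    · exact measure_mono (Set.prod_mono le_rfl (by simpa using hxcl))
    · have hcover : {x} ×ˢ Wcl ⊆ (({x} : Set P2) ×ˢ ({x} : Set P2))
          ∪ ((Wcl ×ˢ (Wbd \ {x})) ∪ ({x} ×ˢ (Wcl \ Wbd))) := by
        rintro ⟨p, y⟩ ⟨hp, hy⟩
        have hp' : x = p := Eq.symm hp
        subst hp'
        by_cases hyx : y = x
        · exact Or.inl ⟨rfl, hyx⟩
        · by_cases hyW : y ∈ Wbd
          · exact Or.inr (Or.inl ⟨hxcl, hyW, hyx⟩)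
          · exact Or.inr (Or.inr ⟨rfl, hy, hyW⟩)
      calc π ({x} ×ˢ Wcl) ≤ π (({x} : Set P2) ×ˢ ({x} : Set P2))
            + (π (Wcl ×ˢ (Wbd \ {x})) + π ({x} ×ˢ (Wcl \ Wbd))) :=
            (measure_mono hcover).trans ((measure_union_le _ _).trans
              (add_le_add le_rfl (measure_union_le _ _)))
        _ = π (({x} : Set P2) ×ˢ ({x} : Set P2)) := by rw [hW2, hK1, add_zero, add_zero]
  have hA : π (({x} : Set P2) ×ˢ ({x} : Set P2)) = ENNReal.ofReal α := by
    apply hsplit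
    rw [hm1 {x} hxW hxm, smul_dirac_apply]; simp
  have hB : π (({x} : Set P2) ×ˢ ({x} : Set P2)) = ENNReal.ofReal β := by
    have hν : π (Wcl ×ˢ ({x} : Set P2)) = ENNReal.ofReal β := by
      rw [hm2 {x} hxW hxm, smul_dirac_apply]; simp
    rw [← hν]
    apply le_antisymm
    · exact measure_mono (Set.prod_mono (by simpa using hxcl) le_rfl)
    · have hcover : Wcl ×ˢ ({x} : Set P2) ⊆ (({x} : Set P2) ×ˢ ({x} : Set P2))
          ∪ (((Wbd \ {x}) ×ˢ Wcl) ∪ ((Wcl \ Wbd) ×ˢ {x})) := by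
        rintro ⟨p, y⟩ ⟨hp, hy⟩
        have hy' : x = y := Eq.symm hy
        subst hy'
        by_cases hpx : p = x
        · exact Or.inl ⟨hpx, rfl⟩
        · by_cases hpW : p ∈ Wbd
          · exact Or.inr (Or.inl ⟨⟨hpW, hpx⟩, hxcl⟩)
          · exact Or.inr (Or.inr ⟨⟨hp, hpW⟩, rfl⟩)
      calc π (Wcl ×ˢ ({x} : Set P2)) ≤ π (({x} : Set P2) ×ˢ ({x} : Set P2))
            + (π ((Wbd \ {x}) ×ˢ Wcl) + π ((Wcl \ Wbd) ×ˢ {x})) :=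
            (measure_mono hcover).trans ((measure_union_le _ _).trans
              (add_le_add le_rfl (measure_union_le _ _)))
        _ = π (({x} : Set P2) ×ˢ ({x} : Set P2)) := by rw [hW1, hK2, add_zero, add_zero]
  rw [hA] at hB
  exact (ENNReal.ofReal_eq_ofReal_iff hα hβ).1 hB

end Key

section Final

lemma smul_dirac_apply' {γ : Type*} [MeasurableSpace γ] [MeasurableSingletonClass γ]
    (c : ℝ≥0∞) (a : γ) (A : Set γ) :
    (c • Measure.dirac a) A = if a ∈ A then c else 0 := by
  rw [Measure.smul_apply, Measure.dirac_apply, smul_eq_mul]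
  by_cases h : a ∈ A <;> simp [h, indicator]

lemma ofReal_min_add_sub {α β : ℝ} (hα : 0 ≤ α) (hβ : 0 ≤ β) :
    ENNReal.ofReal (min α β) + ENNReal.ofReal (α - β) = ENNReal.ofReal α := by
  rcases le_total α β with h | h
  · rw [min_eq_left h, ENNReal.ofReal_eq_zero.2 (sub_nonpos.2 h), add_zero]
  · rw [min_eq_right h, ← ENNReal.ofReal_add hβ (by linarith)]
    ring_nf

lemma OT_le_distDiag {x : P2} (hx : x ∈ Wbd) {α β : ℝ} (hα : 0 < α) (hβ : 0 < β) :
    OT (ENNReal.ofReal α • Measure.dirac x) (ENNReal.ofReal β • Measure.dirac x)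
      ≤ ENNReal.ofReal (distDiag x) := by
  have hxcl : x ∈ Wcl := wbd_subset_wcl hx
  set z : P2 := (x.1, x.1) with hz_def
  have hzD : z ∈ Diag := rfl
  have hzcl : z ∈ Wcl := diag_subset_wcl hzD
  have hzW : z ∉ Wbd := fun h => lt_irrefl x.1 h
  set π₀ : Measure (P2 × P2) :=
    ENNReal.ofReal (min α β) • Measure.dirac (x, x)
      + (ENNReal.ofReal (α - β) • Measure.dirac (x, z)
        + ENNReal.ofReal (β - α) • Measure.dirac (z, x)) with hπ₀_def
  set T : Set (P2 × P2) := {(x, x), (x, z), (z, x)} with hT_def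
  have hTfin : T.Finite := (Set.finite_singleton _).insert _ |>.insert _
  have hev : ∀ E : Set (P2 × P2), π₀ E
      = (if (x, x) ∈ E then ENNReal.ofReal (min α β) else 0)
        + ((if (x, z) ∈ E then ENNReal.ofReal (α - β) else 0)
          + (if (z, x) ∈ E then ENNReal.ofReal (β - α) else 0)) := by
    intro E
    rw [hπ₀_def]
    simp only [Measure.add_apply]
    rw [smul_dirac_apply', smul_dirac_apply', smul_dirac_apply']
  have hnull : π₀ Tᶜ = 0 := by
    rw [hev]
    have h1 : (x, x) ∈ T := by simp [hT_def]
    have h2 : (x, z) ∈ T := by simp [hT_def]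
    have h3 : (z, x) ∈ T := by simp [hT_def]
    simp [h1, h2, h3]
  have hTS : T ⊆ Wcl ×ˢ Wcl := by
    rintro p hp
    rcases hp with h | h | h <;> subst h <;> exact ⟨by assumption, by assumption⟩
  have hfin : π₀ Set.univ < ⊤ := by
    rw [hev]
    simp only [Set.mem_univ, if_pos]
    exact ENNReal.add_lt_top.2 ⟨ENNReal.ofReal_lt_top,
      ENNReal.add_lt_top.2 ⟨ENNReal.ofReal_lt_top, ENNReal.ofReal_lt_top⟩⟩
  have hcoup : IsCoupling π₀ (ENNReal.ofReal α • Measure.dirac x)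
      (ENNReal.ofReal β • Measure.dirac x) := by
    refine ⟨radonOn_of_finite π₀ hTfin hTS hnull hfin, ?_, ?_⟩
    · intro A hA hAm
      rw [hev, smul_dirac_apply]
      have hzA : z ∉ A := fun h => hzW (hA h)
      by_cases hxA : x ∈ A
      · have h1 : (x, x) ∈ A ×ˢ Wcl := ⟨hxA, hxcl⟩
        have h2 : (x, z) ∈ A ×ˢ Wcl := ⟨hxA, hzcl⟩
        have h3 : (z, x) ∉ A ×ˢ Wcl := fun h => hzA h.1
        rw [if_pos h1, if_pos h2, if_neg h3, if_pos hxA, add_zero]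
        exact ofReal_min_add_sub hα.le hβ.le
      · have h1 : (x, x) ∉ A ×ˢ Wcl := fun h => hxA h.1
        have h2 : (x, z) ∉ A ×ˢ Wcl := fun h => hxA h.1
        have h3 : (z, x) ∉ A ×ˢ Wcl := fun h => hzA h.1
        rw [if_neg h1, if_neg h2, if_neg h3, if_neg hxA]
        simp
    · intro B hB hBm
      rw [hev, smul_dirac_apply]
      have hzB : z ∉ B := fun h => hzW (hB h)
      by_cases hxB : x ∈ B
      · have h1 : (x, x) ∈ Wcl ×ˢ B := ⟨hxcl, hxB⟩
        have h2 : (x, z) ∉ Wcl ×ˢ B := fun h => hzB h.2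
        have h3 : (z, x) ∈ Wcl ×ˢ B := ⟨hzcl, hxB⟩
        rw [if_pos h1, if_neg h2, if_pos h3, if_pos hxB, zero_add]
        rw [min_comm]
        exact ofReal_min_add_sub hβ.le hα.le
      · have h1 : (x, x) ∉ Wcl ×ˢ B := fun h => hxB h.2
        have h2 : (x, z) ∉ Wcl ×ˢ B := fun h => hzB h.2
        have h3 : (z, x) ∉ Wcl ×ˢ B := fun h => hxB h.2
        rw [if_neg h1, if_neg h2, if_neg h3, if_neg hxB]
        simp
  have hcost : costInf π₀ ≤ ENNReal.ofReal (distDiag x) := by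
    have hsub : msupport π₀ ⊆ T := msupport_subset_of_null π₀ hTfin hnull
    refine iSup_le fun p => iSup_le fun hp => ?_
    have hdz : distDiag z = 0 := distDiag_eq_zero hzD
    have hr0 : 0 ≤ distDiag x := distDiag_nonneg x
    rcases hsub hp with h | h | h <;> subst h <;> apply ENNReal.ofReal_le_ofReal
    · calc dW x x ≤ dist x x := min_le_left _ _
        _ = 0 := dist_self x
        _ ≤ distDiag x := hr0
    · calc dW x z ≤ distDiag x + distDiag z := min_le_right _ _
        _ = distDiag x := by rw [hdz, add_zero]
    · calc dW z x ≤ distDiag z + distDiag x := min_le_right _ _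
        _ = distDiag x := by rw [hdz, zero_add]
  calc OT (ENNReal.ofReal α • Measure.dirac x) (ENNReal.ofReal β • Measure.dirac x)
      ≤ costInf π₀ := iInf₂_le π₀ hcoup
    _ ≤ ENNReal.ofReal (distDiag x) := hcost

lemma dirac_mem_MInf {x : P2} (hx : x ∈ Wbd) {α : ℝ} (hα : 0 < α) :
    (ENNReal.ofReal α • Measure.dirac x) ∈ MInf := by
  set μ := ENNReal.ofReal α • Measure.dirac x with hμ_def
  have hnull : μ ({x} : Set P2)ᶜ = 0 := by rw [smul_dirac_apply]; simp
  have hfin : μ Set.univ < ⊤ := by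
    rw [smul_dirac_apply]; simp [ENNReal.ofReal_lt_top]
  refine ⟨radonOn_of_finite μ (Set.finite_singleton x) (by simpa using hx) hnull hfin, ?_⟩
  have hsub : msupport μ ⊆ {x} := msupport_subset_of_null μ (Set.finite_singleton x) hnull
  have : persInf μ ≤ ENNReal.ofReal (distDiag x) := by
    refine iSup_le fun y => iSup_le fun hy => ?_
    have : y = x := hsub hy
    subst this
    exact le_rfl
  exact this.trans_lt ENNReal.ofReal_lt_top

lemma dirac_mem_Mf {x : P2} (hx : x ∈ Wbd) {α : ℝ} (hα : 0 < α) :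
    (ENNReal.ofReal α • Measure.dirac x) ∈ Mf := by
  refine ⟨dirac_mem_MInf hx hα, fun ε hε => ?_⟩
  refine (measure_mono (subset_univ _)).trans_lt ?_
  rw [smul_dirac_apply]; simp [ENNReal.ofReal_lt_top]

lemma no_countable_dense {x : P2} (hx : x ∈ Wbd) (M' : Set (Measure P2))
    (hM' : ∀ α : ℝ, 0 < α → (ENNReal.ofReal α • Measure.dirac x) ∈ M') :
    ¬ (∃ D : Set (Measure P2), D ⊆ M' ∧ D.Countable ∧
        ∀ μ ∈ M', ∀ ε : ℝ, 0 < ε → ∃ ν ∈ D, OT μ ν < ENNReal.ofReal ε) := by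
  rintro ⟨D, -, hDc, hdense⟩
  have hr : 0 < distDiag x := distDiag_pos hx
  have hchoice : ∀ α : ℝ, 0 < α → ∃ ν, ν ∈ D ∧ ν (Bset x) = ENNReal.ofReal α := by
    intro α hα
    obtain ⟨ν, hνD, hν⟩ := hdense (ENNReal.ofReal α • Measure.dirac x) (hM' α hα)
      (distDiag x / 2) (half_pos hr)
    rw [OT, iInf_lt_iff] at hν
    obtain ⟨π, hν⟩ := hν
    rw [iInf_lt_iff] at hν
    obtain ⟨hπ, hc⟩ := hν
    exact ⟨ν, hνD, key_marg hx hα.le ν π hπ hc⟩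
  classical
  set f : ℝ → Measure P2 := fun α => if h : 0 < α then (hchoice α h).choose else 0 with hf_def
  have hfD : MapsTo f (Ioi (0 : ℝ)) D := by
    intro α hα
    have hα' : (0 : ℝ) < α := hα
    simp only [hf_def, dif_pos hα']
    exact (hchoice α hα').choose_spec.1
  have hfB : ∀ α : ℝ, 0 < α → (f α) (Bset x) = ENNReal.ofReal α := by
    intro α hα
    simp only [hf_def, dif_pos hα]
    exact (hchoice α hα).choose_spec.2
  have hinj : InjOn f (Ioi (0 : ℝ)) := by
    intro a ha b hb hab
    have h1 : ENNReal.ofReal a = ENNReal.ofReal b := by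
      rw [← hfB a ha, ← hfB b hb, hab]
    exact (ENNReal.ofReal_eq_ofReal_iff (le_of_lt ha) (le_of_lt hb)).1 h1
  have hcnt : (Ioi (0 : ℝ)).Countable := hfD.countable_of_injOn hinj hDc
  have hcnt2 : (Real.exp ⁻¹' (Ioi (0 : ℝ))).Countable :=
    hcnt.preimage Real.exp_injective
  have huniv : Real.exp ⁻¹' (Ioi (0 : ℝ)) = Set.univ := by
    ext t; simp [Real.exp_pos]
  rw [huniv] at hcnt2
  exact Cardinal.not_countable_real hcnt2

end Final

/-- `(M_f^∞, OT_∞)` and `(M^∞, OT_∞)` are not separable: for a fixed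
`x ∈ W`, the uncountable family `{α·δ_x : α > 0}` is pairwise at distance
`d(x,Δ) > 0`, so neither space admits a countable dense subset. -/
theorem MInf_and_Mf_not_separable (x : P2) (hx : x ∈ Wbd) :
    (∀ α β : ℝ, 0 < α → 0 < β → α ≠ β →
      OT (ENNReal.ofReal α • Measure.dirac x) (ENNReal.ofReal β • Measure.dirac x)
        = ENNReal.ofReal (distDiag x) ∧ 0 < distDiag x) ∧
    ¬ (∃ D : Set (Measure P2), D ⊆ Mf ∧ D.Countable ∧
        ∀ μ ∈ Mf, ∀ ε : ℝ, 0 < ε → ∃ ν ∈ D, OT μ ν < ENNReal.ofReal ε) ∧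
    ¬ (∃ D : Set (Measure P2), D ⊆ MInf ∧ D.Countable ∧
        ∀ μ ∈ MInf, ∀ ε : ℝ, 0 < ε → ∃ ν ∈ D, OT μ ν < ENNReal.ofReal ε) := by
  have hr : 0 < distDiag x := distDiag_pos hx
  refine ⟨?_, ?_, ?_⟩
  · intro α β hα hβ hne
    refine ⟨le_antisymm (OT_le_distDiag hx hα hβ) ?_, hr⟩
    rw [OT]
    refine le_iInf fun π => le_iInf fun hπ => ?_
    by_contra h
    push_neg at h
    exact hne (eq_of_cheap_coupling hx hα.le hβ.le π hπ h)
  · exact no_countable_dense hx Mf (fun α hα => dirac_mem_Mf hx hα)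
  · exact no_countable_dense hx MInf (fun α hα => dirac_mem_MInf hx hα)
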